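/- For all words w, z ∈ A⁺, sc_L[w] = sc_L[z] if and only if w = z; i.e., the map assigning to each non-empty word its sequence of coordinates determined by L is injective. -/

import Mathlib

open List

variable {A : Type*} {G : Type*} {A_G : Type*}

/-- `L̈`: the words not in `L` whose maximal proper prefix and suffix are in `L`. -/
def Ddot (L : Set (List A)) : Set (List A) :=
  {v | v ∉ L ∧ v.dropLast ∈ L ∧ v.tail ∈ L}

/-- `IsSc L w s` : `s` is the sequence of coordinates of `w` determined by `L`,
via the recursive construction of the paper: if `w ∈ L` then `s = (w)`; otherwise
select an occurrence `w = w' v w''` of a factor `v ∈ L̈` and put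
`s = sc_L[w' v_α] (v) sc_L[v_ω w'']`. -/
inductive IsSc (L : Set (List A)) : List A → List (List A) → Prop
  | base (w : List A) (hw : w ∈ L) : IsSc L w [w]
  | step (w' w'' v : List A) (s₁ s₂ : List (List A)) (hv : v ∈ Ddot L)
      (h₁ : IsSc L (w' ++ v.dropLast) s₁) (h₂ : IsSc L (v.tail ++ w'') s₂) :
      IsSc L (w' ++ v ++ w'') (s₁ ++ v :: s₂)

open Classical in
/-- `sc_L[w]`, the sequence of coordinates of `w` determined by `L`. -/
noncomputable def scL (L : Set (List A)) (w : List A) : List (List A) :=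
  if h : ∃ s, IsSc L w s then h.choose else []

section Aux

variable {L : Set (List A)}

lemma ddot_two_le (hE : [] ∉ L) {v : List A} (hv : v ∈ Ddot L) : 2 ≤ v.length := by
  obtain ⟨h1, h2, h3⟩ := hv
  match v with
  | [] => exact absurd h2 hE
  | [a] => exact absurd h2 hE
  | a :: b :: t => simp

lemma ddot_ne_nil (hE : [] ∉ L) {v : List A} (hv : v ∈ Ddot L) : v ≠ [] := by
  have := ddot_two_le hE hv
  intro h; subst h; simp at this

lemma ddot_not_infix (hE : [] ∉ L)
    (hFac : ∀ u w : List A, w ∈ L → u ≠ [] → u <:+: w → u ∈ L)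
    {v w : List A} (hv : v ∈ Ddot L) (hw : w ∈ L) (h : v <:+: w) : False :=
  hv.1 (hFac v w hw (ddot_ne_nil hE hv) h)

/-- Inversion for `IsSc`. -/
lemma isSc_cases {w : List A} {s : List (List A)} (h : IsSc L w s) :
    (w ∈ L ∧ s = [w]) ∨
      ∃ w' w'' v s₁ s₂, v ∈ Ddot L ∧ IsSc L (w' ++ v.dropLast) s₁ ∧
        IsSc L (v.tail ++ w'') s₂ ∧ w = w' ++ v ++ w'' ∧ s = s₁ ++ v :: s₂ := by
  cases h with
  | base w hw => exact Or.inl ⟨hw, rfl⟩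
  | step w' w'' v s₁ s₂ hv h₁ h₂ =>
    exact Or.inr ⟨w', w'', v, s₁, s₂, hv, h₁, h₂, rfl, rfl⟩

/-- Existence of a sequence of coordinates for every non-empty word. -/
lemma isSc_exists (hE : [] ∉ L) (hA : ∀ a : A, [a] ∈ L) :
    ∀ (n : ℕ) (w : List A), w.length ≤ n → w ≠ [] → ∃ s, IsSc L w s := by
  intro n
  induction n with
  | zero =>
    intro w h hne
    exact absurd (List.length_eq_zero_iff.mp (Nat.le_zero.mp h)) hne
  | succ n ih =>
    intro w hlen hne
    by_cases hw : w ∈ L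
    · exact ⟨[w], IsSc.base w hw⟩
    · classical
      have hP : ∃ k, ∃ v : List A, v <:+: w ∧ v ≠ [] ∧ v ∉ L ∧ v.length = k :=
        ⟨w.length, w, List.infix_refl w, hne, hw, rfl⟩
      obtain ⟨v, hvw, hvne, hvL, hvlen⟩ := Nat.find_spec hP
      have h2 : 2 ≤ v.length := by
        match v, hvne with
        | [a], _ => exact absurd (hA a) hvL
        | a :: b :: t, _ => simp
      have hdl : v.dropLast ∈ L := by
        by_contra hc
        refine Nat.find_min hP (m := v.length - 1) (by omega)
          ⟨v.dropLast, ((List.dropLast_prefix v).isInfix).trans hvw,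
            List.ne_nil_of_length_pos (by simp; omega), hc, by simp⟩
      have htl : v.tail ∈ L := by
        by_contra hc
        refine Nat.find_min hP (m := v.length - 1) (by omega)
          ⟨v.tail, ((List.tail_suffix v).isInfix).trans hvw,
            List.ne_nil_of_length_pos (by simp; omega), hc, by simp⟩
      have hvD : v ∈ Ddot L := ⟨hvL, hdl, htl⟩
      obtain ⟨w', w'', hw'⟩ := hvw
      have hlen' : w.length = w'.length + v.length + w''.length := by
        rw [← hw']; simp; omega
      obtain ⟨s₁, hs₁⟩ := ih (w' ++ v.dropLast)
        (by simp; omega) (List.ne_nil_of_length_pos (by simp; omega))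
      obtain ⟨s₂, hs₂⟩ := ih (v.tail ++ w'')
        (by simp; omega) (List.ne_nil_of_length_pos (by simp; omega))
      exact ⟨s₁ ++ v :: s₂, hw' ▸ IsSc.step w' w'' v s₁ s₂ hvD hs₁ hs₂⟩

/-- The key step-vs-step comparison, assuming the left occurrence starts no later. -/
lemma step_step (hE : [] ∉ L)
    (hFac : ∀ u w : List A, w ∈ L → u ≠ [] → u <:+: w → u ∈ L)
    (hA : ∀ a : A, [a] ∈ L)
    {w' w'' v x' u x'' : List A} {s₁ s₂ t₁ t₂ : List (List A)}
    (hv : v ∈ Ddot L) (hu : u ∈ Ddot L)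
    (h₁ : IsSc L (w' ++ v.dropLast) s₁) (h₂ : IsSc L (v.tail ++ w'') s₂)
    (k₁ : IsSc L (x' ++ u.dropLast) t₁) (k₂ : IsSc L (u.tail ++ x'') t₂)
    (heq : w' ++ v ++ w'' = x' ++ u ++ x'')
    (hle : w'.length ≤ x'.length)
    (IH : ∀ y : List A, y.length < (w' ++ v ++ w'').length →
      ∀ s t : List (List A), IsSc L y s → IsSc L y t → s = t) :
    s₁ ++ v :: s₂ = t₁ ++ u :: t₂ := by
  classical
  have hv2 := ddot_two_le hE hv
  have hu2 := ddot_two_le hE hu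
  have hvne := ddot_ne_nil hE hv
  have hune := ddot_ne_nil hE hu
  have hex : ∀ y : List A, y ≠ [] → ∃ s, IsSc L y s :=
    fun y hy => isSc_exists hE hA y.length y le_rfl hy
  -- w' is a prefix of x'
  have hpre : w' <+: x' :=
    List.prefix_of_prefix_length_le (l₃ := w' ++ v ++ w'')
      ⟨v ++ w'', by rw [List.append_assoc]⟩
      ⟨u ++ x'', by rw [heq, List.append_assoc]⟩ hle
  obtain ⟨g, rfl⟩ := hpre
  have heq' : v ++ w'' = g ++ (u ++ x'') := by
    apply List.append_cancel_left (as := w')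
    simpa [List.append_assoc] using heq
  by_cases hg : g = []
  · -- the two occurrences start at the same position
    subst hg
    simp only [List.nil_append] at heq'
    simp only [List.append_nil] at k₁ k₂
    rcases lt_trichotomy v.length u.length with hlt | heqlen | hgt
    · exfalso
      have hvu : v <+: u :=
        List.prefix_of_prefix_length_le ⟨w'', heq'⟩ (List.prefix_append u x'')
          (le_of_lt hlt)
      obtain ⟨r, hr⟩ := hvu
      have hrne : r ≠ [] := by
        intro h; subst h; simp at hr
        rw [hr] at hlt; exact lt_irrefl _ hlt
      have : v <:+: u.dropLast := by
        rw [← hr, List.dropLast_append_of_ne_nil hrne]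
        exact (List.prefix_append v r.dropLast).isInfix
      exact ddot_not_infix hE hFac hv hu.2.1 this
    · obtain ⟨rfl, rfl⟩ := List.append_inj heq' heqlen
      have e1 : s₁ = t₁ := IH (w' ++ v.dropLast) (by simp; omega) s₁ t₁ h₁ k₁
      have e2 : s₂ = t₂ := IH (v.tail ++ w'') (by simp; omega) s₂ t₂ h₂ k₂
      rw [e1, e2]
    · exfalso
      have huv : u <+: v :=
        List.prefix_of_prefix_length_le (List.prefix_append u x'') ⟨w'', heq'⟩
          (le_of_lt hgt)
      obtain ⟨r, hr⟩ := huv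
      have hrne : r ≠ [] := by
        intro h; subst h; simp at hr
        rw [hr] at hgt; exact lt_irrefl _ hgt
      have : u <:+: v.dropLast := by
        rw [← hr, List.dropLast_append_of_ne_nil hrne]
        exact (List.prefix_append u r.dropLast).isInfix
      exact ddot_not_infix hE hFac hu hv.2.1 this
  · -- strict case: v starts strictly before u
    have hlens : v.length + w''.length = g.length + u.length + x''.length := by
      have := congrArg List.length heq'; simp at this; omega
    have hglen : 1 ≤ g.length := List.length_pos_iff.mpr hg
    -- end of v is strictly before end of u
    have hlt : v.length < g.length + u.length := by
      by_contra hcon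
      push_neg at hcon
      have hgu : g ++ u <+: v :=
        List.prefix_of_prefix_length_le
          (by rw [heq', ← List.append_assoc]; exact List.prefix_append _ _)
          (List.prefix_append v w'') (by simpa using hcon)
      obtain ⟨r, hr⟩ := hgu
      have : u <:+: v.tail := by
        have : v.tail = g.tail ++ (u ++ r) := by
          rw [← hr, List.append_assoc, List.tail_append_of_ne_nil hg]
        exact ⟨g.tail, r, by rw [this]; simp⟩
      exact ddot_not_infix hE hFac hu hv.2.2 this
    -- decomposition of b := v.tail ++ w''
    have hb : v.tail ++ w'' = g.tail ++ (u ++ x'') := by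
      have := congrArg List.tail heq'
      rwa [List.tail_append_of_ne_nil hvne, List.tail_append_of_ne_nil hg] at this
    -- decomposition of c := x' ++ u.dropLast
    have hvc : v <+: g ++ u.dropLast := by
      apply List.prefix_of_prefix_length_le (List.prefix_append v w'')
        (l₃ := v ++ w'')
      · rw [heq']
        refine ⟨[u.getLast hune] ++ x'', ?_⟩
        rw [List.append_assoc]
        congr 1
        rw [← List.append_assoc, List.dropLast_append_getLast hune]
      · simp; omega
    obtain ⟨c'', hc⟩ := hvc
    have hmid : g.tail ++ u.dropLast = v.tail ++ c'' := by
      have := congrArg List.tail hc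
      rw [List.tail_append_of_ne_nil hvne, List.tail_append_of_ne_nil hg] at this
      exact this.symm
    have hmidne : g.tail ++ u.dropLast ≠ [] :=
      List.ne_nil_of_length_pos (by simp; omega)
    obtain ⟨p, hp⟩ := hex _ hmidne
    obtain ⟨q, hq⟩ := hex (u.tail ++ x'') (List.ne_nil_of_length_pos (by simp; omega))
    -- s₂ = p ++ u :: q
    have e1 : IsSc L (g.tail ++ u ++ x'') (p ++ u :: q) :=
      IsSc.step g.tail x'' u p q hu hp hq
    have hs2 : s₂ = p ++ u :: q := by
      refine IH (v.tail ++ w'') (by simp; omega) s₂ (p ++ u :: q) h₂ ?_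
      rw [hb, ← List.append_assoc]; exact e1
    -- t₁ = s₁ ++ v :: p
    have e2 : IsSc L (w' ++ v ++ c'') (s₁ ++ v :: p) :=
      IsSc.step w' c'' v s₁ p hv h₁ (by rw [← hmid]; exact hp)
    have ht1 : t₁ = s₁ ++ v :: p := by
      refine IH ((w' ++ g) ++ u.dropLast) (by simp; omega) t₁ (s₁ ++ v :: p) k₁ ?_
      have : (w' ++ g) ++ u.dropLast = w' ++ v ++ c'' := by
        rw [List.append_assoc, ← hc, ← List.append_assoc]
      rw [this]; exact e2
    -- t₂ = q
    have ht2 : t₂ = q := IH (u.tail ++ x'') (by simp; omega) t₂ q k₂ hq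
    rw [hs2, ht1, ht2]
    simp

/-- Uniqueness of the sequence of coordinates. -/
lemma isSc_unique (hE : [] ∉ L)
    (hFac : ∀ u w : List A, w ∈ L → u ≠ [] → u <:+: w → u ∈ L)
    (hA : ∀ a : A, [a] ∈ L) :
    ∀ (n : ℕ) (w : List A), w.length ≤ n →
      ∀ s t : List (List A), IsSc L w s → IsSc L w t → s = t := by
  intro n
  induction n with
  | zero =>
    intro w h s t hs ht
    have hwnil : w = [] := List.length_eq_zero_iff.mp (Nat.le_zero.mp h)
    exfalso
    rcases isSc_cases hs with ⟨hw, _⟩ | ⟨w', w'', v, s₁, s₂, hv, _, _, hww, _⟩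
    · exact hE (hwnil ▸ hw)
    · have := ddot_two_le hE hv
      have hL : w.length = w'.length + v.length + w''.length := by
        rw [hww]; simp; omega
      rw [hwnil] at hL
      simp at hL
      omega
  | succ n ih =>
    intro w hlen s t hs ht
    rcases isSc_cases hs with ⟨hw, rfl⟩ | ⟨w', w'', v, s₁, s₂, hv, h₁, h₂, hww, rfl⟩
    · rcases isSc_cases ht with ⟨_, rfl⟩ | ⟨x', x'', u, t₁, t₂, hu, k₁, k₂, hzz, rfl⟩
      · rfl
      · exact absurd (ddot_not_infix hE hFac hu hw ⟨x', x'', hzz.symm⟩) not_false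
    · rcases isSc_cases ht with ⟨hw, rfl⟩ | ⟨x', x'', u, t₁, t₂, hu, k₁, k₂, hzz, rfl⟩
      · exact absurd (ddot_not_infix hE hFac hv hw ⟨w', w'', hww.symm⟩) not_false
      · have heq : w' ++ v ++ w'' = x' ++ u ++ x'' := by rw [← hww, ← hzz]
        have IH : ∀ y : List A, y.length < (w' ++ v ++ w'').length →
            ∀ s t : List (List A), IsSc L y s → IsSc L y t → s = t := by
          intro y hy
          have : (w' ++ v ++ w'').length = w.length := by rw [hww]
          exact ih y (by omega)
        rcases le_total w'.length x'.length with hle | hle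
        · exact step_step hE hFac hA hv hu h₁ h₂ k₁ k₂ heq hle IH
        · refine (step_step hE hFac hA hu hv k₁ k₂ h₁ h₂ heq.symm hle ?_).symm
          intro y hy
          exact IH y (by rw [heq]; exact hy)

/-- Auxiliary gluing function for the tail of a coordinate sequence. -/
def TGlue : List (List A) → List A
  | [] => []
  | [_] => []
  | v :: u :: r => v.getLast?.toList ++ (u.drop (v.length - 1) ++ TGlue r)

/-- Reconstruction of a word from its coordinate sequence. -/
def Glue : List (List A) → List A
  | [] => []
  | u :: r => u ++ TGlue r

lemma TGlue_nil : TGlue ([] : List (List A)) = [] := rfl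

lemma TGlue_cons_cons (v u : List A) (r : List (List A)) :
    TGlue (v :: u :: r) = v.getLast?.toList ++ (u.drop (v.length - 1) ++ TGlue r) := rfl

lemma Glue_cons (u : List A) (r : List (List A)) : Glue (u :: r) = u ++ TGlue r := rfl

lemma TGlue_append : ∀ (x y : List (List A)), x.length % 2 = 0 →
    TGlue (x ++ y) = TGlue x ++ TGlue y
  | [], y, _ => by simp [TGlue_nil]
  | [a], y, h => by simp at h
  | a :: b :: x, y, h => by
    have ih := TGlue_append x y (by simp at h; omega)
    simp only [List.cons_append]
    rw [TGlue_cons_cons, TGlue_cons_cons, ih]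
    simp [List.append_assoc]

/-- A coordinate sequence reconstructs the word, has odd length, and its first
element contains every prefix of the word belonging to `L`. -/
lemma glue_spec (hE : [] ∉ L)
    (hFac : ∀ u w : List A, w ∈ L → u ≠ [] → u <:+: w → u ∈ L)
    {w : List A} {s : List (List A)} (h : IsSc L w s) :
    Glue s = w ∧ s.length % 2 = 1 ∧
      ∃ u r, s = u :: r ∧ ∀ p : List A, p <+: w → p ∈ L → p <+: u := by
  induction h with
  | base w hw =>
    exact ⟨by simp [Glue_cons, TGlue_nil], by simp, w, [], rfl, fun p hp _ => hp⟩
  | step w' w'' v s₁ s₂ hv h₁ h₂ ih₁ ih₂ =>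
    obtain ⟨hg₁, hl₁, u₁, r₁, rfl, hp₁⟩ := ih₁
    obtain ⟨hg₂, hl₂, u₂, r₂, rfl, hp₂⟩ := ih₂
    have hv2 := ddot_two_le hE hv
    have hvne := ddot_ne_nil hE hv
    have hvt : v.tail <+: u₂ := hp₂ v.tail (List.prefix_append _ _) hv.2.2
    obtain ⟨m, rfl⟩ := hvt
    have hm : m ++ TGlue r₂ = w'' := by
      have : v.tail ++ (m ++ TGlue r₂) = v.tail ++ w'' := by
        simpa [Glue, List.append_assoc] using hg₂
      exact List.append_cancel_left this
    constructor
    · -- gluing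
      show Glue ((u₁ :: r₁) ++ v :: (v.tail ++ m) :: r₂) = w' ++ v ++ w''
      have hr₁ : r₁.length % 2 = 0 := by simp at hl₁; omega
      simp only [List.cons_append, Glue_cons]
      rw [TGlue_append r₁ (v :: (v.tail ++ m) :: r₂) hr₁]
      have hdrop : (v.tail ++ m).drop (v.length - 1) = m := by
        have : v.tail.length = v.length - 1 := by simp
        rw [← this, List.drop_left]
      have hlast : v.getLast?.toList = [v.getLast hvne] := by
        rw [List.getLast?_eq_getLast hvne]; rfl
      show u₁ ++ (TGlue r₁ ++ TGlue (v :: (v.tail ++ m) :: r₂)) = w' ++ v ++ w''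
      rw [show TGlue (v :: (v.tail ++ m) :: r₂) =
          v.getLast?.toList ++ ((v.tail ++ m).drop (v.length - 1) ++ TGlue r₂) from rfl,
        hdrop, hlast, hm]
      have hG : u₁ ++ TGlue r₁ = w' ++ v.dropLast := hg₁
      calc u₁ ++ (TGlue r₁ ++ ([v.getLast hvne] ++ w''))
          = (u₁ ++ TGlue r₁) ++ ([v.getLast hvne] ++ w'') := by
            rw [List.append_assoc]
        _ = (w' ++ v.dropLast) ++ ([v.getLast hvne] ++ w'') := by rw [hG]
        _ = w' ++ (v.dropLast ++ [v.getLast hvne]) ++ w'' := by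
            simp [List.append_assoc]
        _ = w' ++ v ++ w'' := by rw [List.dropLast_append_getLast hvne]
    constructor
    · simp at hl₁ hl₂ ⊢; omega
    · refine ⟨u₁, r₁ ++ v :: (v.tail ++ m) :: r₂, by simp, ?_⟩
      intro p hp hpL
      have hplen : p.length ≤ w'.length + v.length - 1 := by
        by_contra hcon
        push_neg at hcon
        have : w' ++ v <+: p := by
          apply List.prefix_of_prefix_length_le ⟨w'', rfl⟩ hp
          simp; omega
        obtain ⟨r, hr⟩ := this
        have : v <:+: p := ⟨w', r, hr⟩
        exact absurd (hFac v p hpL hvne this) hv.1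
      have hpa : p <+: w' ++ v.dropLast := by
        apply List.prefix_of_prefix_length_le hp
        · refine ⟨[v.getLast hvne] ++ w'', ?_⟩
          rw [List.append_assoc, List.append_assoc]
          congr 1
          rw [← List.append_assoc, List.dropLast_append_getLast hvne]
        · simp; omega
      exact hp₁ p hpa hpL

end Aux

/-- For all words `w, z ∈ A⁺`, `sc_L[w] = sc_L[z]` if and only
if `w = z`: the map assigning to each non-empty word its sequence of coordinates
determined by `L` is injective. -/
theorem scL_injective [Nonempty A] (L : Set (List A))
    (hE : [] ∉ L)
    (hFac : ∀ u w : List A, w ∈ L → u ≠ [] → u <:+: w → u ∈ L)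
    (hA : ∀ a : A, [a] ∈ L)
    (w z : List A) (hw : w ≠ []) (hz : z ≠ [])
    (s t : List (List A)) (hs : IsSc L w s) (ht : IsSc L z t) :
    s = t ↔ w = z := by
  constructor
  · intro hst
    have h1 := (glue_spec hE hFac hs).1
    have h2 := (glue_spec hE hFac ht).1
    rw [← h1, ← h2, hst]
  · intro hwz
    subst hwz
    exact isSc_unique hE hFac hA w.length w le_rfl s t hs ht
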